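/- Let p₁, ..., p_s be distinct primes and a₁,...,a_s nonzero integers, b₁,...,b_s positive integers with gcd(a_i,b_i)=1. Then the real number p₁^{a₁/b₁} ··· p_s^{a_s/b_s} is algebraic over ℚ of degree exactly lcm(b₁,...,b_s). -/

import Mathlib

open Polynomial

private lemma padicValRat_prod {p : ℕ} [Fact p.Prime] {ι : Type*} (s : Finset ι) (F : ι → ℚ)
    (hF : ∀ i ∈ s, F i ≠ 0) :
    padicValRat p (∏ i ∈ s, F i) = ∑ i ∈ s, padicValRat p (F i) := by
  classical
  induction s using Finset.cons_induction with
  | empty => simp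
  | cons i s his ih =>
    rw [Finset.prod_cons, Finset.sum_cons,
      padicValRat.mul (hF i (Finset.mem_cons_self _ _))
        (Finset.prod_ne_zero_iff.2 fun j hj => hF j (Finset.mem_cons_of_mem hj)),
      ih fun j hj => hF j (Finset.mem_cons_of_mem hj)]

private lemma padicValRat_zpow {p : ℕ} [Fact p.Prime] {q : ℚ} (hq : q ≠ 0) (z : ℤ) :
    padicValRat p (q ^ z) = z * padicValRat p q := by
  cases z with
  | ofNat n => simpa using padicValRat.pow (p := p) hq (k := n)
  | negSucc n =>
    rw [zpow_negSucc, padicValRat.inv, padicValRat.pow q, Int.negSucc_eq]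
    push_cast
    ring

theorem stmt_9 (s : ℕ) (p : Fin s → ℕ) (hp : ∀ i, (p i).Prime)
    (hinj : Function.Injective p)
    (a : Fin s → ℤ) (b : Fin s → ℕ) (ha : ∀ i, a i ≠ 0) (hb : ∀ i, 0 < b i)
    (hcop : ∀ i, IsCoprime (a i) (b i : ℤ)) :
    IsAlgebraic ℚ (∏ i, (p i : ℝ) ^ ((a i : ℝ) / (b i : ℝ))) ∧
    (minpoly ℚ (∏ i, (p i : ℝ) ^ ((a i : ℝ) / (b i : ℝ)))).natDegree
      = Finset.univ.lcm b := by
  classical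
  set N : ℕ := Finset.univ.lcm b with hN
  have hbdvd : ∀ i, b i ∣ N := fun i => Finset.dvd_lcm (Finset.mem_univ i)
  have hNpos : 0 < N := by
    rw [hN, Nat.pos_iff_ne_zero]
    intro h0
    rw [Finset.lcm_eq_zero_iff] at h0
    obtain ⟨i, -, hi⟩ := h0
    exact (hb i).ne' hi
  set e : Fin s → ℤ := fun i => a i * ((N / b i : ℕ) : ℤ) with he
  have hNdiv : ∀ i, (b i : ℤ) * ((N / b i : ℕ) : ℤ) = (N : ℤ) := by
    intro i
    exact_mod_cast Nat.mul_div_cancel' (hbdvd i)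
  have hdivpos : ∀ i, (0 : ℤ) < ((N / b i : ℕ) : ℤ) := by
    intro i
    have := Nat.div_pos (Nat.le_of_dvd hNpos (hbdvd i)) (hb i)
    exact_mod_cast this
  set q : ℚ := ∏ i, (p i : ℚ) ^ (e i) with hq
  have hppos : ∀ i, (0 : ℚ) < (p i : ℚ) := fun i => by exact_mod_cast (hp i).pos
  have hq0 : 0 < q := Finset.prod_pos fun i _ => zpow_pos (hppos i) _
  set x : ℝ := ∏ i, (p i : ℝ) ^ ((a i : ℝ) / (b i : ℝ)) with hx
  have hprpos : ∀ i, (0 : ℝ) < (p i : ℝ) := fun i => by exact_mod_cast (hp i).pos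
  have hxpos : 0 < x := Finset.prod_pos fun i _ => Real.rpow_pos_of_pos (hprpos i) _
  have hxN : x ^ N = (q : ℝ) := by
    rw [hx, ← Finset.prod_pow, hq]
    push_cast
    refine Finset.prod_congr rfl fun i _ => ?_
    rw [← Real.rpow_natCast ((p i : ℝ) ^ ((a i : ℝ) / (b i : ℝ))) N,
      ← Real.rpow_mul (hprpos i).le, ← Real.rpow_intCast (p i : ℝ) (e i)]
    congr 1
    have hbne : (b i : ℝ) ≠ 0 := by exact_mod_cast (hb i).ne'
    have hmul : ((b i : ℝ)) * ((N / b i : ℕ) : ℝ) = (N : ℝ) := by exact_mod_cast hNdiv i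
    rw [show ((e i : ℤ) : ℝ) = (a i : ℝ) * ((N / b i : ℕ) : ℝ) from by
      simp only [he, Int.cast_mul, Int.cast_natCast]]
    rw [div_mul_eq_mul_div, div_eq_iff hbne, ← hmul]
    ring
  -- integrality
  have haev : (Polynomial.aeval x) ((X : ℚ[X]) ^ N - C q) = 0 := by
    simp [hxN]
  have hmono : ((X : ℚ[X]) ^ N - C q).Monic := monic_X_pow_sub_C q hNpos.ne'
  have hint : IsIntegral ℚ x := ⟨(X : ℚ[X]) ^ N - C q, hmono, haev⟩
  set P : ℚ[X] := minpoly ℚ x with hP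
  set d : ℕ := P.natDegree with hd
  have hdpos : 0 < d := minpoly.natDegree_pos hint
  have hdle : d ≤ N := by
    have := Polynomial.natDegree_le_natDegree (minpoly.min ℚ x hmono haev)
    simpa [natDegree_X_pow_sub_C] using this
  -- valuation of q
  have hvq : ∀ j, padicValRat (p j) q = e j := by
    intro j
    haveI : Fact (p j).Prime := ⟨hp j⟩
    rw [hq, padicValRat_prod _ _ fun i _ => zpow_ne_zero _ (hppos i).ne']
    rw [Finset.sum_eq_single j]
    · rw [padicValRat_zpow (hppos j).ne', padicValRat.self (hp j).one_lt, mul_one]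
    · intro i _ hij
      rw [padicValRat_zpow (hppos i).ne']
      have hnd : ¬ p j ∣ p i := by
        intro hdvd
        exact hij (hinj ((Nat.prime_dvd_prime_iff_eq (hp j) (hp i)).1 hdvd).symm)
      have : padicValRat (p j) ((p i : ℚ)) = 0 := by
        rw [padicValRat.of_nat, padicValNat.eq_zero_of_not_dvd hnd]
        simp
      rw [this, mul_zero]
    · simp
  -- key: rational powers of x force divisibility
  have key : ∀ m : ℕ, (∃ r : ℚ, x ^ m = (r : ℝ)) → N ∣ m := by
    rintro m ⟨r, hr⟩
    have hrpos : 0 < r := by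
      have : (0 : ℝ) < (r : ℝ) := hr ▸ pow_pos hxpos m
      exact_mod_cast this
    have hqm : r ^ N = q ^ m := by
      have : ((r ^ N : ℚ) : ℝ) = ((q ^ m : ℚ) : ℝ) := by
        push_cast
        rw [← hr, ← hxN, ← pow_mul, ← pow_mul, Nat.mul_comm]
      exact_mod_cast this
    have hbm : ∀ j, b j ∣ m := by
      intro j
      haveI : Fact (p j).Prime := ⟨hp j⟩
      have hv : (N : ℤ) * padicValRat (p j) r = (m : ℤ) * e j := by
        have h1 := padicValRat_zpow (p := p j) hrpos.ne' (N : ℤ)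
        have h2 := padicValRat_zpow (p := p j) hq0.ne' (m : ℤ)
        rw [zpow_natCast] at h1 h2
        rw [hqm, h2, hvq j] at h1
        linarith [h1]
      have hdvd : (N : ℤ) ∣ (m : ℤ) * e j := ⟨padicValRat (p j) r, by linarith [hv]⟩
      have : (b j : ℤ) * ((N / b j : ℕ) : ℤ) ∣ ((m : ℤ) * a j) * ((N / b j : ℕ) : ℤ) := by
        rw [hNdiv j]
        convert hdvd using 1
        rw [he]
        ring
      have hbja : (b j : ℤ) ∣ (m : ℤ) * a j :=
        (mul_dvd_mul_iff_right (hdivpos j).ne').1 this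
      have : (b j : ℤ) ∣ (m : ℤ) := (hcop j).symm.dvd_of_dvd_mul_right hbja
      exact_mod_cast this
    exact Finset.lcm_dvd fun j _ => hbm j
  -- x ^ d is rational via complex roots
  have hxd : ∃ r : ℚ, x ^ d = (r : ℝ) := by
    set f : ℚ →+* ℂ := algebraMap ℚ ℂ with hf
    have hPdvd : P ∣ ((X : ℚ[X]) ^ N - C q) := minpoly.dvd ℚ x haev
    have hsplits : Splits (P.map f) := IsAlgClosed.splits _
    have hcard : (P.map f).roots.card = d := by
      rw [← hsplits.natDegree_eq_card_roots, natDegree_map]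
    have hroots : ∀ z ∈ (P.map f).roots, ‖z‖ = x := by
      intro z hz
      have hz0 : (P.map f).eval z = 0 := by
        have := Polynomial.isRoot_of_mem_roots hz
        exact this
      obtain ⟨R, hR⟩ := hPdvd
      have hzN : z ^ N = ((q : ℚ) : ℂ) := by
        have : (((X : ℚ[X]) ^ N - C q).map f).eval z = 0 := by
          rw [hR, Polynomial.map_mul, eval_mul, hz0, zero_mul]
        simpa [sub_eq_zero] using this
      have habs : ‖z‖ ^ N = x ^ N := by
        rw [← norm_pow, hzN, hxN,
          show ((q : ℚ) : ℂ) = (((q : ℝ) : ℝ) : ℂ) from by norm_cast,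
          Complex.norm_real, Real.norm_eq_abs, abs_of_pos (by exact_mod_cast hq0)]
      exact (pow_left_strictMonoOn₀ hNpos.ne').injOn
        (Set.mem_setOf_eq ▸ norm_nonneg z) (Set.mem_setOf_eq ▸ hxpos.le) habs
    have hprod : (P.map f).coeff 0 = (-1) ^ d * ((P.map f).roots.prod) := by
      have := hsplits.coeff_zero_eq_prod_roots_of_monic ((minpoly.monic hint).map f)
      rw [this]
      congr 1
      rw [Polynomial.natDegree_map]
    refine ⟨|P.coeff 0|, ?_⟩
    have h1 : ‖(P.map f).coeff 0‖ = x ^ d := by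
      rw [hprod, norm_mul, norm_pow]
      have habsneg : ‖(-1 : ℂ)‖ = 1 := by simp
      rw [habsneg, one_pow, one_mul, ← normHom_apply, map_multiset_prod (normHom (α := ℂ)) _]
      have : ((P.map f).roots.map (normHom (α := ℂ))).prod = x ^ d := by
        have hall : ∀ y ∈ (P.map f).roots.map (normHom (α := ℂ)), y = x := by
          intro y hy
          obtain ⟨z, hz, rfl⟩ := Multiset.mem_map.1 hy
          exact hroots z hz
        rw [Multiset.eq_replicate_of_mem hall, Multiset.prod_replicate,
          Multiset.card_map, hcard]
      rw [this]
    have h2 : (P.map f).coeff 0 = f (P.coeff 0) := Polynomial.coeff_map f 0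
    rw [← h1, h2]
    have : f (P.coeff 0) = (((P.coeff 0 : ℚ) : ℝ) : ℂ) := by
      rw [hf, eq_ratCast]
      norm_cast
    rw [this, Complex.norm_real, Real.norm_eq_abs]
    exact (Rat.cast_abs _).symm
  obtain ⟨r, hr⟩ := hxd
  have hNd : N ∣ d := key d ⟨r, hr⟩
  have hdN : d = N := Nat.le_antisymm hdle (Nat.le_of_dvd hdpos hNd)
  exact ⟨hint.isAlgebraic, hdN⟩
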